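/- arXiv:1004.0163 — 3 statements merged into one kernel-verified Lean document; each statement's English description precedes it below -/
import Mathlib

section
/- For every s ∈ ℂ with Re(s) > 1, every τ in the complex upper half-plane, and every γ = [[a,b],[c,d]] ∈ SL(2,ℤ), one has E(s, γ·τ) = E(s, τ), where γ·τ = (aτ+b)/(cτ+d) is the Möbius action and E(s, τ) = Σ_{(m,n) ∈ ℤ²∖{(0,0)}} (Im τ)^s / |mτ + n|^{2s}. -/
open scoped MatrixGroups

/-- The nonholomorphic Eisenstein series E(s, τ) = Σ_{(m,n) ≠ (0,0)} (Im τ)^s / |mτ+n|^{2s}. -/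
noncomputable def eisensteinSL2 (s τ : ℂ) : ℂ :=
  ∑' p : {p : ℤ × ℤ // p ≠ 0},
    (τ.im : ℂ) ^ s / (‖(p.1.1 : ℂ) * τ + (p.1.2 : ℂ)‖ : ℂ) ^ (2 * s)

private lemma cpow_div_aux (s : ℂ) {x y : ℝ} (hx : 0 ≤ x) (hy : 0 < y) :
    ((x / y : ℝ) : ℂ) ^ s = (x : ℂ) ^ s / (y : ℂ) ^ s := by
  rw [div_eq_mul_inv, Complex.ofReal_mul,
    Complex.mul_cpow_ofReal_nonneg hx (inv_nonneg.mpr hy.le), Complex.ofReal_inv,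
    Complex.inv_cpow _ _ (by
      rw [Complex.arg_ofReal_of_nonneg hy.le]
      exact (ne_of_gt Real.pi_pos).symm), div_eq_mul_inv]

private lemma cpow_two_mul_aux (s : ℂ) {r : ℝ} (hr : 0 < r) :
    (r : ℂ) ^ (2 * s) = ((r ^ 2 : ℝ) : ℂ) ^ s := by
  have h : (Complex.log (r : ℂ) * 2).im = 0 := by
    simp [Complex.log_im, Complex.arg_ofReal_of_nonneg hr.le]
  rw [Complex.cpow_mul _ (by rw [h]; exact neg_neg_iff_pos.mpr Real.pi_pos)
      (by rw [h]; exact Real.pi_pos.le)]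
  congr 1
  rw [show (2 : ℂ) = ((2 : ℕ) : ℂ) by norm_num, Complex.cpow_natCast]
  push_cast
  ring

private lemma lin_ne_zero {τ : ℂ} (hτ : 0 < τ.im) {m n : ℤ} (h : (m, n) ≠ (0, 0)) :
    (m : ℂ) * τ + (n : ℂ) ≠ 0 := by
  intro hz
  rcases eq_or_ne m 0 with hm | hm
  · subst hm
    simp only [Int.cast_zero, zero_mul, zero_add] at hz
    have : n = 0 := by exact_mod_cast hz
    exact h (by simp [this])
  · have : ((m : ℂ) * τ + (n : ℂ)).im = 0 := by rw [hz]; rfl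
    simp only [Complex.add_im, Complex.mul_im, Complex.intCast_im, Complex.intCast_re,
      zero_mul, add_zero, mul_zero] at this
    have hm' : (m : ℝ) ≠ 0 := Int.cast_ne_zero.mpr hm
    exact mul_ne_zero hm' hτ.ne' this

/-- For Re(s) > 1, τ in the upper half-plane and γ ∈ SL(2,ℤ),
E(s, γ·τ) = E(s, τ) where γ·τ = (aτ+b)/(cτ+d). -/
theorem eisensteinSL2_invariant
    (s : ℂ) (hs : 1 < s.re) (τ : ℂ) (hτ : 0 < τ.im)
    (γ : Matrix.SpecialLinearGroup (Fin 2) ℤ) :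
    eisensteinSL2 s ((((γ 0 0 : ℤ) : ℂ) * τ + ((γ 0 1 : ℤ) : ℂ)) /
        (((γ 1 0 : ℤ) : ℂ) * τ + ((γ 1 1 : ℤ) : ℂ)))
      = eisensteinSL2 s τ := by
  set a : ℤ := γ 0 0 with ha
  set b : ℤ := γ 0 1 with hb
  set c : ℤ := γ 1 0 with hc
  set d : ℤ := γ 1 1 with hd
  have hdet : a * d - b * c = 1 := by
    have h1 := γ.2
    rw [Matrix.det_fin_two] at h1
    exact h1
  -- the equiv on nonzero lattice points
  set F : ℤ × ℤ → ℤ × ℤ := fun p => (p.1 * a + p.2 * c, p.1 * b + p.2 * d) with hF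
  set G : ℤ × ℤ → ℤ × ℤ := fun p => (p.1 * d - p.2 * c, -p.1 * b + p.2 * a) with hG
  have hGF : ∀ p, G (F p) = p := by
    rintro ⟨m, n⟩
    simp only [hF, hG]
    ext
    · simp only; linear_combination m * hdet
    · simp only; linear_combination n * hdet
  have hFG : ∀ p, F (G p) = p := by
    rintro ⟨m, n⟩
    simp only [hF, hG]
    ext
    · simp only; linear_combination m * hdet
    · simp only; linear_combination n * hdet
  let e : {p : ℤ × ℤ // p ≠ 0} ≃ {p : ℤ × ℤ // p ≠ 0} :=
    { toFun := fun p => ⟨F p.1, fun h => p.2 (by rw [← hGF p.1, h]; simp [hG])⟩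
      invFun := fun p => ⟨G p.1, fun h => p.2 (by rw [← hFG p.1, h]; simp [hF])⟩
      left_inv := fun p => Subtype.ext (hGF p.1)
      right_inv := fun p => Subtype.ext (hFG p.1) }
  unfold eisensteinSL2
  conv_rhs => rw [← Equiv.tsum_eq e]
  apply tsum_congr
  rintro ⟨⟨m, n⟩, hp⟩
  simp only [e, Equiv.coe_fn_mk, hF]
  set D : ℂ := (c : ℂ) * τ + (d : ℂ) with hD
  have hcd : ((c, d) : ℤ × ℤ) ≠ (0, 0) := by
    intro h
    rw [Prod.mk.injEq] at h
    rw [h.1, h.2] at hdet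
    simp at hdet
  have hDne : D ≠ 0 := lin_ne_zero hτ hcd
  have hQpos : 0 < Complex.normSq D := Complex.normSq_pos.mpr hDne
  have hdetR : (a : ℝ) * d - b * c = 1 := by exact_mod_cast hdet
  have h_im : ((((a : ℤ) : ℂ) * τ + ((b : ℤ) : ℂ)) / D).im = τ.im / Complex.normSq D := by
    rw [Complex.div_im]
    simp only [hD, Complex.add_im, Complex.add_re, Complex.mul_im, Complex.mul_re,
      Complex.intCast_im, Complex.intCast_re, zero_mul, mul_zero, sub_zero, add_zero, zero_add]
    field_simp
    ring_nf
    linear_combination (Complex.normSq ((c : ℂ) * τ + (d : ℂ)))⁻¹ * hdetR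
  have hmn : ((m * a + n * c, m * b + n * d) : ℤ × ℤ) ≠ (0, 0) := by
    intro h
    apply hp
    have h2 : F (m, n) = (0, 0) := h
    have h3 := hGF (m, n)
    rw [h2] at h3
    rw [← h3]
    simp [hG]
  have hNne : ((m * a + n * c : ℤ) : ℂ) * τ + ((m * b + n * d : ℤ) : ℂ) ≠ 0 :=
    lin_ne_zero hτ hmn
  have h_frac : (m : ℂ) * ((((a : ℤ) : ℂ) * τ + ((b : ℤ) : ℂ)) / D) + (n : ℂ)
      = (((m * a + n * c : ℤ) : ℂ) * τ + ((m * b + n * d : ℤ) : ℂ)) / D := by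
    field_simp
    push_cast
    ring
  set N : ℂ := ((m * a + n * c : ℤ) : ℂ) * τ + ((m * b + n * d : ℤ) : ℂ) with hN
  have hApos : 0 < ‖N‖ := norm_pos_iff.mpr hNne
  have hRpos : 0 < ‖D‖ := norm_pos_iff.mpr hDne
  rw [h_im, h_frac, norm_div,
    cpow_div_aux s hτ.le hQpos, cpow_div_aux (2 * s) (norm_nonneg N) hRpos,
    cpow_two_mul_aux s hRpos, Complex.sq_norm]
  have hQs : ((Complex.normSq D : ℝ) : ℂ) ^ s ≠ 0 := by
    rw [Ne, Complex.cpow_eq_zero_iff]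
    push_neg
    intro h
    exact absurd h (by exact_mod_cast hQpos.ne')
  have hAs : ((‖N‖ : ℝ) : ℂ) ^ (2 * s) ≠ 0 := by
    rw [Ne, Complex.cpow_eq_zero_iff]
    push_neg
    intro h
    exact absurd h (by exact_mod_cast hApos.ne')
  field_simp
end

section
/- Let n ≥ 2. Every matrix A ∈ SL(n, ℚ) can be written as A = B·γ, where B ∈ SL(n, ℚ) is upper triangular and γ ∈ SL(n, ℤ) (i.e. γ has integer entries and determinant 1). In other words, SL(n, ℚ) = B(ℚ) · SL(n, ℤ), where B(ℚ) denotes the subgroup of upper-triangular matrices in SL(n, ℚ). -/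
namespace SLQBorelAux

open Matrix
section
variable {n : ℕ}

def Good (m i : Fin n) (g : Matrix (Fin n) (Fin n) ℤ) : Prop :=
  ∀ k l, (k ≠ m ∧ k ≠ i) ∨ (l ≠ m ∧ l ≠ i) → g k l = if k = l then 1 else 0

lemma good_mul {m i : Fin n} {g h : Matrix (Fin n) (Fin n) ℤ}
    (hg : Good m i g) (hh : Good m i h) : Good m i (g * h) := by
  intro k l hkl
  rcases hkl with ⟨hk1, hk2⟩ | ⟨hl1, hl2⟩
  · rw [Matrix.mul_apply]
    rw [Finset.sum_congr rfl fun t _ => by rw [hg k t (Or.inl ⟨hk1, hk2⟩)]]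
    simp only [ite_mul, one_mul, zero_mul, Finset.sum_ite_eq, Finset.mem_univ, if_true]
    exact hh k l (Or.inl ⟨hk1, hk2⟩)
  · rw [Matrix.mul_apply]
    rw [Finset.sum_congr rfl fun t _ => by rw [hh t l (Or.inr ⟨hl1, hl2⟩)]]
    simp only [mul_ite, mul_one, mul_zero, Finset.sum_ite_eq', Finset.mem_univ, if_true]
    exact hg k l (Or.inr ⟨hl1, hl2⟩)
def pairEquiv {m i : Fin n} (hmi : m ≠ i) : Fin 2 ≃ {k : Fin n // k = m ∨ k = i} where
  toFun t := if t = 0 then ⟨m, Or.inl rfl⟩ else ⟨i, Or.inr rfl⟩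
  invFun k := if k.1 = m then 0 else 1
  left_inv t := by
    fin_cases t
    · simp
    · simp [hmi.symm]
  right_inv k := by
    rcases k with ⟨k, hk | hk⟩ <;> subst hk
    · simp
    · simp [hmi.symm]

lemma det_good {m i : Fin n} (hmi : m ≠ i) {g : Matrix (Fin n) (Fin n) ℤ} (hg : Good m i g) :
    g.det = g m m * g i i - g m i * g i m := by
  classical
  set p : Fin n → Prop := fun k => k = m ∨ k = i with hp
  let e : (Fin 2 ⊕ {k : Fin n // ¬ p k}) ≃ Fin n :=
    (Equiv.sumCongr (pairEquiv hmi) (Equiv.refl _)).trans (Equiv.sumCompl p)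
  have key : g = (Matrix.fromBlocks !![g m m, g m i; g i m, g i i] 0 0
      (1 : Matrix {k : Fin n // ¬ p k} {k : Fin n // ¬ p k} ℤ)).submatrix e.symm e.symm := by
    ext k l
    have hesymm : ∀ k : Fin n, e.symm k =
        if h : p k then Sum.inl ((pairEquiv hmi).symm ⟨k, h⟩) else Sum.inr ⟨k, h⟩ := by
      intro k
      by_cases h : p k
      · simp [e, Equiv.symm_trans_apply, Equiv.sumCompl_symm_apply_of_pos (p := p) h, h]
      · simp [e, Equiv.symm_trans_apply, Equiv.sumCompl_symm_apply_of_neg (p := p) h, h]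
    rw [Matrix.submatrix_apply, hesymm, hesymm]
    by_cases hk : p k <;> by_cases hl : p l
    · rw [dif_pos hk, dif_pos hl]
      rcases hk with hk | hk <;> rcases hl with hl | hl <;> subst hk <;> subst hl <;>
        simp [pairEquiv, hmi, hmi.symm, Matrix.fromBlocks_apply₁₁]
    · rw [dif_pos hk, dif_neg hl]
      rw [hg k l (Or.inr ⟨fun h => hl (Or.inl h), fun h => hl (Or.inr h)⟩)]
      have : k ≠ l := by rintro rfl; exact hl hk
      simp [this]
    · rw [dif_neg hk, dif_pos hl]
      rw [hg k l (Or.inl ⟨fun h => hk (Or.inl h), fun h => hk (Or.inr h)⟩)]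
      have : k ≠ l := by rintro rfl; exact hk hl
      simp [this]
    · rw [dif_neg hk, dif_neg hl]
      rw [hg k l (Or.inl ⟨fun h => hk (Or.inl h), fun h => hk (Or.inr h)⟩)]
      simp [Matrix.fromBlocks_apply₂₂, Matrix.one_apply, Subtype.ext_iff]
  rw [show g.det = _ from congrArg Matrix.det key, Matrix.det_submatrix_equiv_self, Matrix.det_fromBlocks_zero₂₁, Matrix.det_one,
    Matrix.det_fin_two_of, mul_one]
def gmat (m i : Fin n) (p q r s : ℤ) : Matrix (Fin n) (Fin n) ℤ :=
  fun k l => if k = m ∧ l = m then p else if k = m ∧ l = i then q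
    else if k = i ∧ l = m then r else if k = i ∧ l = i then s
    else if k = l then 1 else 0

lemma good_gmat {m i : Fin n} (hmi : m ≠ i) (p q r s : ℤ) : Good m i (gmat m i p q r s) := by
  intro k l h
  rcases h with ⟨h1, h2⟩ | ⟨h1, h2⟩ <;> simp [gmat, h1, h2]

lemma gmat_mm {m i : Fin n} (hmi : m ≠ i) (p q r s : ℤ) : gmat m i p q r s m m = p := by
  simp [gmat]
lemma gmat_mi {m i : Fin n} (hmi : m ≠ i) (p q r s : ℤ) : gmat m i p q r s m i = q := by
  simp [gmat, hmi, hmi.symm]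
lemma gmat_im {m i : Fin n} (hmi : m ≠ i) (p q r s : ℤ) : gmat m i p q r s i m = r := by
  simp [gmat, hmi, hmi.symm]
lemma gmat_ii {m i : Fin n} (hmi : m ≠ i) (p q r s : ℤ) : gmat m i p q r s i i = s := by
  simp [gmat, hmi, hmi.symm]

/-- multiplication by a Good matrix leaves columns outside {m,i} unchanged -/
lemma mul_good_apply_ne (M : Matrix (Fin n) (Fin n) ℚ) {m i : Fin n}
    {g : Matrix (Fin n) (Fin n) ℤ} (hg : Good m i g) {l : Fin n}
    (hl1 : l ≠ m) (hl2 : l ≠ i) (k : Fin n) :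
    (M * g.map (Int.castRingHom ℚ)) k l = M k l := by
  rw [Matrix.mul_apply]
  rw [Finset.sum_congr rfl fun t _ => by
    rw [Matrix.map_apply, hg t l (Or.inr ⟨hl1, hl2⟩)]]
  simp [apply_ite]

lemma mul_good_apply_mem (M : Matrix (Fin n) (Fin n) ℚ) {m i : Fin n} (hmi : m ≠ i)
    {g : Matrix (Fin n) (Fin n) ℤ} (hg : Good m i g) {l : Fin n}
    (hl : l = m ∨ l = i) (k : Fin n) :
    (M * g.map (Int.castRingHom ℚ)) k l
      = M k m * (g m l : ℚ) + M k i * (g i l : ℚ) := by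
  rw [Matrix.mul_apply]
  have hsub : ({m, i} : Finset (Fin n)) ⊆ Finset.univ := Finset.subset_univ _
  rw [← Finset.sum_subset hsub (fun t _ ht => by
    have h1 : t ≠ m := fun h => ht (by simp [h])
    have h2 : t ≠ i := fun h => ht (by simp [h])
    have h3 : t ≠ l := by rcases hl with rfl | rfl; exact h1; exact h2
    rw [Matrix.map_apply, hg t l (Or.inl ⟨h1, h2⟩), if_neg h3]
    simp)]
  rw [Finset.sum_pair hmi]
  rfl

lemma bezout (a b : ℚ) : ∃ p q r s : ℤ, p * s - q * r = 1 ∧ a * p + b * r = 0 := by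
  by_cases ha : a = 0
  · exact ⟨1, 0, 0, 1, by ring, by simp [ha]⟩
  · set x : ℤ := a.num * b.den with hx
    set y : ℤ := b.num * a.den with hy
    have hxne : x ≠ 0 := mul_ne_zero (Rat.num_ne_zero.mpr ha)
      (by exact_mod_cast b.den_nz)
    set G : ℤ := (Int.gcd x y : ℤ) with hG
    have hGpos : 0 < Int.gcd x y :=
      Nat.pos_of_ne_zero (fun h => hxne ((Int.gcd_eq_zero_iff.mp h).1))
    have hcop : Int.gcd (x / G) (y / G) = 1 := by
      rw [hG]; exact Int.gcd_div_gcd_div_gcd hGpos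
    have hcop' : IsCoprime (y / G) (x / G) := by
      rw [Int.isCoprime_iff_gcd_eq_one, Int.gcd_comm]
      exact hcop
    obtain ⟨u, v, huv⟩ := hcop'
    refine ⟨y / G, v, -(x / G), u, by linear_combination huv, ?_⟩
    have hdx : G ∣ x := Int.gcd_dvd_left x y
    have hdy : G ∣ y := Int.gcd_dvd_right x y
    have h1 : x * (y / G) = y * (x / G) := by
      rw [← Int.mul_ediv_assoc x hdy, ← Int.mul_ediv_assoc y hdx, mul_comm x y]
    have hda : ((a.den : ℚ)) ≠ 0 := by exact_mod_cast a.den_nz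
    have hdb : ((b.den : ℚ)) ≠ 0 := by exact_mod_cast b.den_nz
    have hma : (a.num : ℚ) = a * (a.den : ℚ) := (div_eq_iff hda).mp (Rat.num_div_den a)
    have hmb : (b.num : ℚ) = b * (b.den : ℚ) := (div_eq_iff hdb).mp (Rat.num_div_den b)
    have hz : x * (y / G) + y * (-(x / G)) = 0 := by
      rw [mul_neg, h1]; ring
    have hzq : ((x : ℚ)) * ((y / G : ℤ) : ℚ) + (y : ℚ) * ((-(x / G) : ℤ) : ℚ) = 0 := by
      exact_mod_cast congrArg (fun t : ℤ => (t : ℚ)) hz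
    rw [hx, hy] at hzq
    push_cast at hzq
    have key : (a * ((y / G : ℤ) : ℚ) + b * ((-(x / G) : ℤ) : ℚ))
        * ((a.den : ℚ) * (b.den : ℚ)) = 0 := by
      push_cast at hzq ⊢
      linear_combination (-((y / G : ℤ) : ℚ)) * (b.den : ℚ) * hma
        + ((x / G : ℤ) : ℚ) * (a.den : ℚ) * hmb + hzq
    have := mul_eq_zero.mp key
    rcases this with h | h
    · push_cast at h ⊢
      linear_combination h
    · exact absurd h (mul_ne_zero hda hdb)
lemma pair_step (M : Matrix (Fin n) (Fin n) ℚ) {m i : Fin n} (hmi : m ≠ i) :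
    ∃ g : Matrix (Fin n) (Fin n) ℤ, g.det = 1 ∧ Good m i g ∧
      (∀ k l, l ≠ m → l ≠ i → (M * g.map (Int.castRingHom ℚ)) k l = M k l) ∧
      (M * g.map (Int.castRingHom ℚ)) i m = 0 ∧
      (∀ k, M k m = 0 → M k i = 0 →
        (M * g.map (Int.castRingHom ℚ)) k m = 0 ∧
        (M * g.map (Int.castRingHom ℚ)) k i = 0) := by
  obtain ⟨p, q, r, s, hdet, hzero⟩ := bezout (M i m) (M i i)
  have hgood := good_gmat hmi p q r s
  refine ⟨gmat m i p q r s, ?_, hgood, ?_, ?_, ?_⟩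
  · rw [det_good hmi hgood, gmat_mm hmi, gmat_ii hmi, gmat_mi hmi, gmat_im hmi]
    linear_combination hdet
  · exact fun k l h1 h2 => mul_good_apply_ne M hgood h1 h2 k
  · rw [mul_good_apply_mem M hmi hgood (Or.inl rfl) i, gmat_mm hmi, gmat_im hmi]
    exact hzero
  · intro k h1 h2
    constructor
    · rw [mul_good_apply_mem M hmi hgood (Or.inl rfl) k, h1, h2]; ring
    · rw [mul_good_apply_mem M hmi hgood (Or.inr rfl) k, h1, h2]; ring

def mapQ (g : Matrix.SpecialLinearGroup (Fin n) ℤ) : Matrix (Fin n) (Fin n) ℚ :=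
  ((g : Matrix (Fin n) (Fin n) ℤ)).map (Int.castRingHom ℚ)

lemma mapQ_mul (g h : Matrix.SpecialLinearGroup (Fin n) ℤ) :
    mapQ (g * h) = mapQ g * mapQ h := by
  unfold mapQ
  rw [Matrix.SpecialLinearGroup.coe_mul, Matrix.map_mul]

lemma mapQ_one : mapQ (1 : Matrix.SpecialLinearGroup (Fin n) ℤ) = 1 := by
  simp [mapQ]

lemma inner_reduce (i : Fin n) : ∀ t : ℕ, t ≤ (i : ℕ) →
    ∀ M : Matrix (Fin n) (Fin n) ℚ,
      (∀ k l : Fin n, i < k → l < k → M k l = 0) →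
      ∃ g : Matrix.SpecialLinearGroup (Fin n) ℤ,
        (∀ k l : Fin n, i < k → l < k → (M * mapQ g) k l = 0) ∧
        (∀ l : Fin n, (l : ℕ) < t → (M * mapQ g) i l = 0) := by
  intro t
  induction t with
  | zero =>
    intro _ M hM
    refine ⟨1, ?_, ?_⟩
    · rw [mapQ_one, mul_one]; exact hM
    · intro l hl; omega
  | succ t ih =>
    intro ht M hM
    obtain ⟨g₁, hg₁, hrow⟩ := ih (by omega) M hM
    set M₁ := M * mapQ g₁ with hM₁
    have hin : (i : ℕ) < n := i.isLt
    set m : Fin n := ⟨t, by omega⟩ with hm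
    have hmi : m ≠ i := by
      intro h
      have := congrArg Fin.val h
      simp only [hm] at this
      omega
    obtain ⟨g₂, hdet, hgood, hne, hz, hpres⟩ := pair_step M₁ hmi
    refine ⟨g₁ * ⟨g₂, hdet⟩, ?_, ?_⟩ <;>
      rw [show M * mapQ (HMul.hMul (α := Matrix.SpecialLinearGroup (Fin n) ℤ)
          (β := Matrix.SpecialLinearGroup (Fin n) ℤ) g₁ ⟨g₂, hdet⟩) = M₁ * g₂.map (Int.castRingHom ℚ) by
        exact (congrArg (M * ·) (mapQ_mul g₁ ⟨g₂, hdet⟩)).trans (mul_assoc M _ _).symm]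
    · intro k l hik hlk
      by_cases hl : l = m ∨ l = i
      · have hmk : m < k := by
          rw [Fin.lt_def] at hik ⊢
          simp only [hm]
          omega
        have h1 : M₁ k m = 0 := hg₁ k m hik hmk
        have h2 : M₁ k i = 0 := hg₁ k i hik hik
        rcases hl with rfl | rfl
        · exact (hpres k h1 h2).1
        · exact (hpres k h1 h2).2
      · push_neg at hl
        rw [hne k l hl.1 hl.2]
        exact hg₁ k l hik hlk
    · intro l hl
      rcases Nat.lt_succ_iff_lt_or_eq.mp hl with hl' | hl'
      · have hlm : l ≠ m := by
          intro h
          have := congrArg Fin.val h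
          simp only [hm] at this
          omega
        have hli : l ≠ i := by
          intro h
          have := congrArg Fin.val h
          omega
        rw [hne i l hlm hli]
        exact hrow l hl'
      · have : l = m := Fin.ext (by simp only [hm]; exact hl')
        rw [this]
        exact hz

lemma outer_reduce : ∀ t : ℕ, ∀ M : Matrix (Fin n) (Fin n) ℚ,
    ∃ g : Matrix.SpecialLinearGroup (Fin n) ℤ,
      ∀ k l : Fin n, n - t ≤ (k : ℕ) → l < k → (M * mapQ g) k l = 0 := by
  intro t
  induction t with
  | zero =>
    intro M
    exact ⟨1, fun k l hk _ => absurd hk (by have := k.isLt; omega)⟩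
  | succ t ih =>
    intro M
    by_cases hcase : n - (t + 1) = n - t
    · obtain ⟨g, hg⟩ := ih M
      exact ⟨g, fun k l hk hlk => hg k l (by omega) hlk⟩
    · have htn : t + 1 ≤ n := by omega
      obtain ⟨g₁, hg₁⟩ := ih M
      set i : Fin n := ⟨n - (t + 1), by omega⟩ with hi
      have hhyp : ∀ k l : Fin n, i < k → l < k → (M * mapQ g₁) k l = 0 := by
        intro k l hik hlk
        refine hg₁ k l ?_ hlk
        rw [Fin.lt_def] at hik
        simp only [hi] at hik
        omega
      obtain ⟨g₂, hz1, hz2⟩ := inner_reduce i i.val le_rfl (M * mapQ g₁) hhyp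
      refine ⟨g₁ * g₂, ?_⟩
      intro k l hk hlk
      rw [mapQ_mul, ← mul_assoc]
      rcases lt_or_eq_of_le (show (i : ℕ) ≤ (k : ℕ) by simp only [hi]; omega) with h | h
      · exact hz1 k l (Fin.lt_def.mpr h) hlk
      · have hki : k = i := Fin.ext h.symm
        subst hki
        exact hz2 l (Fin.lt_def.mp hlk)

end
end SLQBorelAux

open Matrix

/-- For n ≥ 2, every A ∈ SL(n,ℚ) factors as A = B·γ with B upper
triangular in SL(n,ℚ) and γ ∈ SL(n,ℤ); i.e. SL(n,ℚ) = B(ℚ)·SL(n,ℤ). -/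
theorem SLnQ_eq_borel_mul_SLnZ (n : ℕ) (hn : 2 ≤ n)
    (A : Matrix.SpecialLinearGroup (Fin n) ℚ) :
    ∃ (B : Matrix.SpecialLinearGroup (Fin n) ℚ)
      (γ : Matrix.SpecialLinearGroup (Fin n) ℤ),
      (B : Matrix (Fin n) (Fin n) ℚ).BlockTriangular id ∧
      A = B * Matrix.SpecialLinearGroup.map (Int.castRingHom ℚ) γ := by
  obtain ⟨g, hg⟩ := SLQBorelAux.outer_reduce (n := n) n (↑A)
  refine ⟨A * Matrix.SpecialLinearGroup.map (Int.castRingHom ℚ) g, g⁻¹, ?_, ?_⟩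
  · intro k l hkl
    have hcoe : ((A * Matrix.SpecialLinearGroup.map (Int.castRingHom ℚ) g :
        Matrix.SpecialLinearGroup (Fin n) ℚ) : Matrix (Fin n) (Fin n) ℚ)
        = (↑A : Matrix (Fin n) (Fin n) ℚ) * SLQBorelAux.mapQ g := rfl
    rw [hcoe]
    exact hg k l (by omega) hkl
  · rw [mul_assoc, ← _root_.map_mul, mul_inv_cancel, _root_.map_one, mul_one]
end

section
/- Let d ≥ 1, let g be a real symmetric positive definite d × d matrix, and for τ = x + iy in the complex upper half-plane define the lattice sum Γ_{(d,d)}(τ) = (det g)^{1/2} Σ_{(m,n) ∈ ℤ^d × ℤ^d} exp( −(π/y) Σ_{i,j} g_{ij} (m_i − n_i τ)(m_j − n_j τ̄) ), noting that the exponent is real because g is symmetric. Then Γ_{(d,d)}(−1/τ) = Γ_{(d,d)}(τ) for every τ in the upper half-plane. -/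
open scoped ComplexConjugate

/-- The Narain lattice sum Γ_{(d,d)}(τ) for a metric g on the d-torus:
Γ_{(d,d)}(τ) = √(det g) Σ_{(m,n) ∈ ℤ^d × ℤ^d}
  exp(−(π/Im τ) Σ_{i,j} g i j (mᵢ − nᵢτ)(mⱼ − nⱼτ̄)). -/
noncomputable def narainLatticeSum (d : ℕ) (g : Matrix (Fin d) (Fin d) ℝ) (τ : ℂ) : ℂ :=
  (Real.sqrt g.det : ℂ) *
    ∑' p : (Fin d → ℤ) × (Fin d → ℤ),
      Complex.exp (-(Real.pi / τ.im) *
        ∑ i : Fin d, ∑ j : Fin d, (g i j : ℂ) *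
          ((p.1 i : ℂ) - (p.2 i : ℂ) * τ) * ((p.1 j : ℂ) - (p.2 j : ℂ) * conj τ))

/-- For d ≥ 1 and g real symmetric positive definite, the Narain lattice
sum is invariant under the inversion τ ↦ −1/τ on the upper half-plane. -/
theorem narainLatticeSum_inversion_invariant
    (d : ℕ) (hd : 1 ≤ d) (g : Matrix (Fin d) (Fin d) ℝ)
    (hsymm : g.IsSymm) (hpos : g.PosDef)
    (τ : ℂ) (hτ : 0 < τ.im) :
    narainLatticeSum d g (-1 / τ) = narainLatticeSum d g τ := by
  have hτ0 : τ ≠ 0 := by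
    intro h; rw [h] at hτ; simp at hτ
  have hτc : (starRingEnd ℂ) τ ≠ 0 := by simpa using hτ0
  have hns : Complex.normSq τ ≠ 0 := by simpa using hτ0
  have hnsC : (Complex.normSq τ : ℂ) ≠ 0 := by exact_mod_cast hns
  have him0 : τ.im ≠ 0 := ne_of_gt hτ
  have him : (-1 / τ).im = τ.im / Complex.normSq τ := by
    rw [neg_div, Complex.neg_im, one_div, Complex.inv_im]
    ring
  have hconj : conj (-1 / τ) = -1 / conj τ := by
    rw [map_div₀, map_neg, map_one]
  unfold narainLatticeSum
  congr 1
  rw [← Equiv.tsum_eq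
    (⟨fun p => (p.2, -p.1), fun p => (-p.2, p.1),
      fun p => by simp, fun p => by simp⟩ :
      ((Fin d → ℤ) × (Fin d → ℤ)) ≃ ((Fin d → ℤ) × (Fin d → ℤ)))]
  refine tsum_congr fun p => ?_
  simp only [Equiv.coe_fn_mk]
  congr 1
  have hmc : (Complex.normSq τ : ℂ) = τ * conj τ := (Complex.mul_conj τ).symm
  have key : ∀ i j : Fin d,
      (g i j : ℂ) * ((p.2 i : ℂ) - (((-p.1) i : ℤ) : ℂ) * (-1 / τ))
        * ((p.2 j : ℂ) - (((-p.1) j : ℤ) : ℂ) * conj (-1 / τ))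
      = ((g i j : ℂ) * (((p.1 i : ℂ) - (p.2 i : ℂ) * τ)
          * ((p.1 j : ℂ) - (p.2 j : ℂ) * conj τ))) / (Complex.normSq τ : ℂ) := by
    intro i j
    rw [hconj, hmc]
    push_cast [Pi.neg_apply]
    field_simp
    ring
  calc
    -(↑Real.pi / ↑(-1 / τ).im) *
        ∑ i : Fin d, ∑ j : Fin d, (g i j : ℂ) *
          ((p.2 i : ℂ) - (((-p.1) i : ℤ) : ℂ) * (-1 / τ))
          * ((p.2 j : ℂ) - (((-p.1) j : ℤ) : ℂ) * conj (-1 / τ))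
      = -(↑Real.pi / ↑(-1 / τ).im) *
        ((∑ i : Fin d, ∑ j : Fin d, (g i j : ℂ) * (((p.1 i : ℂ) - (p.2 i : ℂ) * τ)
          * ((p.1 j : ℂ) - (p.2 j : ℂ) * conj τ))) / (Complex.normSq τ : ℂ)) := by
        congr 1
        rw [Finset.sum_div]
        refine Finset.sum_congr rfl fun i _ => ?_
        rw [Finset.sum_div]
        exact Finset.sum_congr rfl fun j _ => key i j
    _ = -(↑Real.pi / ↑τ.im) *
        ∑ i : Fin d, ∑ j : Fin d, (g i j : ℂ) * (((p.1 i : ℂ) - (p.2 i : ℂ) * τ)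
          * ((p.1 j : ℂ) - (p.2 j : ℂ) * conj τ)) := by
        have hcoef : (-(↑Real.pi / ↑((-1 / τ).im)) : ℂ)
            = -(↑Real.pi / ↑τ.im) * (Complex.normSq τ : ℂ) := by
          rw [him]
          push_cast
          field_simp
        rw [hcoef, mul_assoc, mul_div_cancel₀ _ hnsC]
    _ = -(↑Real.pi / ↑τ.im) *
        ∑ i : Fin d, ∑ j : Fin d, (g i j : ℂ) *
          ((p.1 i : ℂ) - (p.2 i : ℂ) * τ)
          * ((p.1 j : ℂ) - (p.2 j : ℂ) * conj τ) := by
        congr 1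
        exact Finset.sum_congr rfl fun i _ => Finset.sum_congr rfl fun j _ => by ring
end
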